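/- Let α = 1 and β > 0, let φ be an analytic self-map of the open unit disk D, and let g be analytic on D. Then the operator U_gC_φ, defined by (U_gC_φ f)(z) = ∫₀^z f(φ(ξ)) g'(ξ) dξ, is bounded from Z^1 to Z^β if and only if g'' ∈ H_{v_β}^∞ and sup_{z∈D} (1−|z|²)^β log(2/(1−|φ(z)|²)) |g'(z)φ'(z)| < ∞. -/

import Mathlib

noncomputable section

/-- The open unit disk in the complex plane. -/
def uD : Set ℂ := Metric.ball 0 1

/-- The Zygmund-type quantity `(1-|z|^2)^a * |f''(z)|`. -/
def zygS (a : ℝ) (f : ℂ → ℂ) (z : ℂ) : ℝ := (1 - ‖z‖ ^ 2) ^ a * ‖deriv (deriv f) z‖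

/-- Membership in the Zygmund-type space `Z^a`. -/
def memZ (a : ℝ) (f : ℂ → ℂ) : Prop :=
  AnalyticOn ℂ f uD ∧ ∃ M : ℝ, ∀ z ∈ uD, zygS a f z ≤ M

/-- The Zygmund-type norm `‖f‖_{Z^a} = |f 0| + |f' 0| + sup_{z ∈ D} (1-|z|^2)^a |f''(z)|`. -/
def zNorm (a : ℝ) (f : ℂ → ℂ) : ℝ := ‖f 0‖ + ‖deriv f 0‖ + sSup (zygS a f '' uD)

/-- Membership in the weighted space `H^∞_{v_b}` (for `u` analytic on `uD`). -/
def memHv (b : ℝ) (u : ℂ → ℂ) : Prop :=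
  ∃ M : ℝ, ∀ z ∈ uD, (1 - ‖z‖ ^ 2) ^ b * ‖u z‖ ≤ M

/-- `T` is a bounded operator from `Z^a` to `Z^b`. -/
def boundedOp (a b : ℝ) (T : (ℂ → ℂ) → ℂ → ℂ) : Prop :=
  (∀ f, memZ a f → memZ b (T f)) ∧
    ∃ C > 0, ∀ f, memZ a f → zNorm b (T f) ≤ C * zNorm a f

/-- `(U_g C_φ f)(z) = ∫₀^z f(φ(ξ)) g'(ξ) dξ`, parametrized along the segment from `0` to `z`. -/
def UgCphi (g φ : ℂ → ℂ) (f : ℂ → ℂ) : ℂ → ℂ :=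
  fun z => ∫ t in (0:ℝ)..1, z * (f (φ ((t : ℂ) * z)) * deriv g ((t : ℂ) * z))

open Complex Metric MeasureTheory intervalIntegral Set Filter

lemma isOpen_uD : IsOpen uD := Metric.isOpen_ball

lemma mem_uD {z : ℂ} : z ∈ uD ↔ ‖z‖ < 1 := by
  simp [uD, Metric.mem_ball, dist_zero_right]

lemma zero_mem_uD : (0:ℂ) ∈ uD := by simp [mem_uD]

lemma smul_mem_uD {z : ℂ} (hz : z ∈ uD) {t : ℝ} (h0 : 0 ≤ t) (h1 : t ≤ 1) :
    (t:ℂ) * z ∈ uD := by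
  rw [mem_uD] at *
  have : ‖(t:ℂ) * z‖ = t * ‖z‖ := by
    rw [norm_mul, Complex.norm_real, Real.norm_of_nonneg h0]
  rw [this]
  nlinarith [norm_nonneg z]

lemma norm_cast_mul (t : ℝ) (z : ℂ) (h0 : 0 ≤ t) : ‖(t:ℂ) * z‖ = t * ‖z‖ := by
  rw [norm_mul, Complex.norm_real, Real.norm_of_nonneg h0]

/-- The key primitive lemma: `F w = ∫_0^1 w h(t w) dt` has derivative `h z` on `uD`. -/
lemma hasDerivAt_primitive {h : ℂ → ℂ} (hh : AnalyticOnNhd ℂ h uD) {z : ℂ} (hz : z ∈ uD) :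
    HasDerivAt (fun w => ∫ t in (0:ℝ)..1, w * h ((t:ℂ) * w)) (h z) z := by
  have hz1 : ‖z‖ < 1 := mem_uD.1 hz
  set r : ℝ := (‖z‖ + 1)/2 with hr
  have hzr : ‖z‖ < r := by rw [hr]; linarith
  have hr1 : r < 1 := by rw [hr]; linarith
  have hr0 : 0 ≤ r := le_trans (norm_nonneg z) hzr.le
  have hsub : closedBall (0:ℂ) r ⊆ uD := by
    intro w hw
    rw [mem_uD]
    have := mem_closedBall_zero_iff.1 hw
    linarith
  have hcont : ContinuousOn h uD := hh.differentiableOn.continuousOn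
  have hcont' : ContinuousOn (deriv h) uD := hh.deriv.differentiableOn.continuousOn
  obtain ⟨C₁, hC₁⟩ := (isCompact_closedBall (0:ℂ) r).exists_bound_of_continuousOn (hcont.mono hsub)
  obtain ⟨C₂, hC₂⟩ := (isCompact_closedBall (0:ℂ) r).exists_bound_of_continuousOn (hcont'.mono hsub)
  set ε : ℝ := r - ‖z‖ with hε
  have hεpos : 0 < ε := by rw [hε]; linarith
  have hball : ∀ x ∈ ball z ε, ‖x‖ < r := by
    intro x hx
    have := mem_ball_iff_norm.1 hx
    calc ‖x‖ = ‖z + (x - z)‖ := by ring_nf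
    _ ≤ ‖z‖ + ‖x - z‖ := norm_add_le _ _
    _ < ‖z‖ + ε := by linarith
    _ = r := by rw [hε]; ring
  have hmem : ∀ x : ℂ, ‖x‖ < r → ∀ t : ℝ, 0 ≤ t → t ≤ 1 → (t:ℂ) * x ∈ closedBall (0:ℂ) r := by
    intro x hx t ht0 ht1
    rw [mem_closedBall_zero_iff, norm_cast_mul t x ht0]
    nlinarith [norm_nonneg x]
  -- continuity in t of the integrand, for any fixed x with ‖x‖ < r
  have hcont_t : ∀ x : ℂ, ‖x‖ < r → ContinuousOn (fun t : ℝ => x * h ((t:ℂ) * x)) (Icc 0 1) := by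
    intro x hx
    apply ContinuousOn.mul continuousOn_const
    apply hcont.comp
    · exact ((Complex.continuous_ofReal.mul continuous_const).continuousOn)
    · intro t ht
      exact hsub (hmem x hx t ht.1 ht.2)
  have hcont_t' : ∀ x : ℂ, ‖x‖ < r →
      ContinuousOn (fun t : ℝ => h ((t:ℂ) * x) + x * (deriv h ((t:ℂ) * x) * (t:ℂ))) (Icc 0 1) := by
    intro x hx
    have hmap : ∀ t ∈ Icc (0:ℝ) 1, (t:ℂ) * x ∈ uD := fun t ht => hsub (hmem x hx t ht.1 ht.2)
    have hc : ContinuousOn (fun t : ℝ => (t:ℂ) * x) (Icc 0 1) :=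
      (Complex.continuous_ofReal.mul continuous_const).continuousOn
    exact (hcont.comp hc hmap).add
      (continuousOn_const.mul (((hcont'.comp hc hmap)).mul
        Complex.continuous_ofReal.continuousOn))
  have key := intervalIntegral.hasDerivAt_integral_of_dominated_loc_of_deriv_le
    (F := fun x t => x * h ((t:ℂ) * x))
    (F' := fun x t => h ((t:ℂ) * x) + x * (deriv h ((t:ℂ) * x) * (t:ℂ)))
    (x₀ := z) (a := 0) (b := 1) (bound := fun _ => C₁ + C₂) (μ := volume) (s := ball z ε) (ball_mem_nhds z hεpos)
    ?_ ?_ ?_ ?_ ?_ ?_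
  · obtain ⟨hint, hder⟩ := key
    have hFTC : (∫ t in (0:ℝ)..1, h ((t:ℂ) * z) + z * (deriv h ((t:ℂ) * z) * (t:ℂ))) = h z := by
      have heq : ∀ t ∈ uIcc (0:ℝ) 1,
          HasDerivAt (fun s : ℝ => (s:ℂ) * h ((s:ℂ) * z))
            (h ((t:ℂ) * z) + z * (deriv h ((t:ℂ) * z) * (t:ℂ))) t := by
        intro t ht
        rw [uIcc_of_le (by norm_num : (0:ℝ) ≤ 1)] at ht
        have hmem' : (t:ℂ) * z ∈ uD := smul_mem_uD hz ht.1 ht.2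
        have hA : HasDerivAt (fun s : ℝ => (s:ℂ)) 1 t := by
          exact Complex.ofRealCLM.hasDerivAt
        have hinner : HasDerivAt (fun s : ℝ => (s:ℂ) * z) z t := by
          simpa using hA.mul_const z
        have hD : HasDerivAt h (deriv h ((t:ℂ) * z)) ((t:ℂ) * z) :=
          ((hh _ hmem').differentiableAt).hasDerivAt
        have hB : HasDerivAt (fun s : ℝ => h ((s:ℂ) * z)) (deriv h ((t:ℂ) * z) * z) t := by
          have := HasDerivAt.comp t hD hinner
          exact this
        have := hA.mul hB
        refine this.congr_deriv ?_
        ring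
      have := intervalIntegral.integral_eq_sub_of_hasDerivAt heq hint
      simpa using this
    rw [hFTC] at hder
    exact hder
  · -- a.e. strong measurability of F x near z
    filter_upwards [ball_mem_nhds z hεpos] with x hx
    apply ContinuousOn.aestronglyMeasurable ((hcont_t x (hball x hx)).mono ?_) measurableSet_uIoc
    rw [uIoc_of_le (by norm_num : (0:ℝ) ≤ 1)]
    exact Ioc_subset_Icc_self
  · -- interval integrability of F z
    exact ((hcont_t z (by linarith)).mono (by rw [uIcc_of_le (by norm_num : (0:ℝ) ≤ 1)])).intervalIntegrable
  · -- measurability of F' z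
    apply ContinuousOn.aestronglyMeasurable ((hcont_t' z (by linarith)).mono ?_) measurableSet_uIoc
    rw [uIoc_of_le (by norm_num : (0:ℝ) ≤ 1)]
    exact Ioc_subset_Icc_self
  · -- bound
    apply Filter.Eventually.of_forall
    intro t ht x hx
    rw [uIoc_of_le (by norm_num : (0:ℝ) ≤ 1)] at ht
    have hxr := hball x hx
    have htx : (t:ℂ) * x ∈ closedBall (0:ℂ) r := hmem x hxr t ht.1.le ht.2
    have h1 : ‖h ((t:ℂ) * x)‖ ≤ C₁ := hC₁ _ htx
    have h2 : ‖deriv h ((t:ℂ) * x)‖ ≤ C₂ := hC₂ _ htx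
    calc ‖h ((t:ℂ) * x) + x * (deriv h ((t:ℂ) * x) * (t:ℂ))‖
        ≤ ‖h ((t:ℂ) * x)‖ + ‖x‖ * (‖deriv h ((t:ℂ) * x)‖ * ‖(t:ℂ)‖) := by
          refine le_trans (norm_add_le _ _) ?_
          rw [norm_mul, norm_mul]
      _ ≤ C₁ + C₂ := by
          have hx1 : ‖x‖ ≤ 1 := le_trans hxr.le hr1.le
          have htn : ‖(t:ℂ)‖ ≤ 1 := by
            rw [Complex.norm_real, Real.norm_of_nonneg ht.1.le]; exact ht.2
          have h2' : (0:ℝ) ≤ ‖deriv h ((t:ℂ) * x)‖ := norm_nonneg _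
          have e1 : ‖deriv h ((t:ℂ) * x)‖ * ‖(t:ℂ)‖ ≤ ‖deriv h ((t:ℂ) * x)‖ :=
            mul_le_of_le_one_right h2' htn
          have e2 : ‖x‖ * (‖deriv h ((t:ℂ) * x)‖ * ‖(t:ℂ)‖) ≤ ‖deriv h ((t:ℂ) * x)‖ * ‖(t:ℂ)‖ :=
            mul_le_of_le_one_left (mul_nonneg h2' (norm_nonneg _)) hx1
          linarith
  · exact intervalIntegrable_const
  · -- HasDerivAt in x
    apply Filter.Eventually.of_forall
    intro t ht x hx
    rw [uIoc_of_le (by norm_num : (0:ℝ) ≤ 1)] at ht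
    have hxr := hball x hx
    have htx : (t:ℂ) * x ∈ uD := hsub (hmem x hxr t ht.1.le ht.2)
    have hinner : HasDerivAt (fun y : ℂ => (t:ℂ) * y) (t:ℂ) x := by
      simpa using (hasDerivAt_id x).const_mul (t:ℂ)
    have hD : HasDerivAt h (deriv h ((t:ℂ) * x)) ((t:ℂ) * x) :=
      ((hh _ htx).differentiableAt).hasDerivAt
    have hB : HasDerivAt (fun y : ℂ => h ((t:ℂ) * y)) (deriv h ((t:ℂ) * x) * (t:ℂ)) x := by
      have := HasDerivAt.comp x hD hinner
      exact this
    have := (hasDerivAt_id x).mul hB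
    simp only [id_eq, one_mul] at this
    exact this

lemma primitive_analyticOn {h : ℂ → ℂ} (hh : AnalyticOnNhd ℂ h uD) :
    AnalyticOn ℂ (fun w => ∫ t in (0:ℝ)..1, w * h ((t:ℂ) * w)) uD := by
  rw [isOpen_uD.analyticOn_iff_analyticOnNhd]
  apply DifferentiableOn.analyticOnNhd _ isOpen_uD
  exact fun z hz => ((hasDerivAt_primitive hh hz).differentiableAt).differentiableWithinAt

lemma primitive_deriv {h : ℂ → ℂ} (hh : AnalyticOnNhd ℂ h uD) {z : ℂ} (hz : z ∈ uD) :
    deriv (fun w => ∫ t in (0:ℝ)..1, w * h ((t:ℂ) * w)) z = h z :=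
  (hasDerivAt_primitive hh hz).deriv

lemma primitive_deriv2 {h : ℂ → ℂ} (hh : AnalyticOnNhd ℂ h uD) {z : ℂ} (hz : z ∈ uD) :
    deriv (deriv (fun w => ∫ t in (0:ℝ)..1, w * h ((t:ℂ) * w))) z = deriv h z := by
  apply Filter.EventuallyEq.deriv_eq
  filter_upwards [isOpen_uD.mem_nhds hz] with w hw
  exact primitive_deriv hh hw

/-! ### sSup facts -/

lemma zygS_nonneg {b : ℝ} {f : ℂ → ℂ} {z : ℂ} (hz : z ∈ uD) : 0 ≤ zygS b f z := by
  have h1 : ‖z‖ < 1 := mem_uD.1 hz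
  have : (0:ℝ) ≤ 1 - ‖z‖ ^ 2 := by nlinarith [norm_nonneg z]
  exact mul_nonneg (Real.rpow_nonneg this _) (norm_nonneg _)

lemma sSup_zygS_nonneg (b : ℝ) (f : ℂ → ℂ) : 0 ≤ sSup (zygS b f '' uD) := by
  apply Real.sSup_nonneg
  rintro x ⟨z, hz, rfl⟩
  exact zygS_nonneg hz

lemma zygS_le_sSup {b : ℝ} {f : ℂ → ℂ} (hf : memZ b f) {z : ℂ} (hz : z ∈ uD) :
    zygS b f z ≤ sSup (zygS b f '' uD) := by
  obtain ⟨M, hM⟩ := hf.2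
  exact le_csSup ⟨M, by rintro x ⟨w, hw, rfl⟩; exact hM w hw⟩ (Set.mem_image_of_mem _ hz)

lemma zygS_le_zNorm {b : ℝ} {f : ℂ → ℂ} (hf : memZ b f) {z : ℂ} (hz : z ∈ uD) :
    zygS b f z ≤ zNorm b f := by
  have h1 := zygS_le_sSup hf hz
  have h0 : (0:ℝ) ≤ ‖f 0‖ + ‖deriv f 0‖ := by positivity
  unfold zNorm; linarith

lemma zNorm_nonneg (b : ℝ) (f : ℂ → ℂ) : 0 ≤ zNorm b f := by
  have := sSup_zygS_nonneg b f
  have h1 : (0:ℝ) ≤ ‖f 0‖ := norm_nonneg _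
  have h2 : (0:ℝ) ≤ ‖deriv f 0‖ := norm_nonneg _
  unfold zNorm; linarith

/-! ### radial derivative lemma -/

lemma hasDerivAt_radial {u : ℂ → ℂ} (hu : AnalyticOnNhd ℂ u uD) {w : ℂ} (hw : w ∈ uD)
    {t : ℝ} (ht : t ∈ Set.Icc (0:ℝ) 1) :
    HasDerivAt (fun s : ℝ => u ((s:ℂ) * w)) (deriv u ((t:ℂ) * w) * w) t := by
  have hmem : (t:ℂ) * w ∈ uD := smul_mem_uD hw ht.1 ht.2
  have hA : HasDerivAt (fun s : ℝ => (s:ℂ)) 1 t := by exact Complex.ofRealCLM.hasDerivAt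
  have hinner : HasDerivAt (fun s : ℝ => (s:ℂ) * w) w t := by simpa using hA.mul_const w
  have hD : HasDerivAt u (deriv u ((t:ℂ) * w)) ((t:ℂ) * w) :=
    ((hu _ hmem).differentiableAt).hasDerivAt
  have := HasDerivAt.comp t hD hinner
  exact this

lemma continuousOn_radial {u : ℂ → ℂ} (hu : ContinuousOn u uD) {w : ℂ} (hw : w ∈ uD) :
    ContinuousOn (fun s : ℝ => u ((s:ℂ) * w)) (Set.Icc 0 1) := by
  apply hu.comp ((Complex.continuous_ofReal.mul continuous_const).continuousOn)
  exact fun t ht => smul_mem_uD hw ht.1 ht.2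

/-! ### growth estimates for Z^1 functions -/

lemma log_ineq {r : ℝ} (h0 : 0 ≤ r) (h1 : r < 1) :
    -Real.log (1 - r) ≤ Real.log (2 / (1 - r ^ 2)) := by
  rw [← Real.log_inv]
  apply Real.log_le_log (inv_pos.2 (by linarith))
  rw [inv_eq_one_div, div_le_div_iff₀ (by linarith) (by nlinarith)]
  nlinarith

lemma deriv_growth' {f : ℂ → ℂ} (hfA : AnalyticOnNhd ℂ f uD) {S : ℝ}
    (hS : ∀ z ∈ uD, zygS 1 f z ≤ S) {w : ℂ} (hw : w ∈ uD) :
    ‖deriv f w‖ ≤ ‖deriv f 0‖ - S * Real.log (1 - ‖w‖) := by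
  set r := ‖w‖ with hrdef
  have hr1 : r < 1 := mem_uD.1 hw
  have hr0 : 0 ≤ r := norm_nonneg w
  have hS0 : 0 ≤ S := le_trans (zygS_nonneg zero_mem_uD) (hS 0 zero_mem_uD)
  have hf' : AnalyticOnNhd ℂ (deriv f) uD := hfA.deriv
  have hf''c : ContinuousOn (deriv (deriv f)) uD := hf'.deriv.differentiableOn.continuousOn
  have hmem : ∀ t ∈ Set.Icc (0:ℝ) 1, (t:ℂ) * w ∈ uD := fun t ht => smul_mem_uD hw ht.1 ht.2
  have heq : ∀ t ∈ uIcc (0:ℝ) 1,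
      HasDerivAt (fun s : ℝ => deriv f ((s:ℂ) * w)) (deriv (deriv f) ((t:ℂ) * w) * w) t := by
    intro t ht
    rw [uIcc_of_le zero_le_one] at ht
    exact hasDerivAt_radial hf' hw ht
  have hcont2 : ContinuousOn (fun t : ℝ => deriv (deriv f) ((t:ℂ) * w) * w) (Set.Icc 0 1) :=
    (continuousOn_radial hf''c hw).mul continuousOn_const
  have hcint : IntervalIntegrable (fun t : ℝ => deriv (deriv f) ((t:ℂ) * w) * w) volume 0 1 := by
    apply ContinuousOn.intervalIntegrable
    rwa [uIcc_of_le zero_le_one]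
  have hFTC := intervalIntegral.integral_eq_sub_of_hasDerivAt heq hcint
  have h1 : deriv f w = deriv f 0 + ∫ t in (0:ℝ)..1, deriv (deriv f) ((t:ℂ) * w) * w := by
    rw [hFTC]; simp
  -- pointwise bound
  have hpt : ∀ t ∈ Set.Icc (0:ℝ) 1,
      ‖deriv (deriv f) ((t:ℂ) * w) * w‖ ≤ S * r / (1 - t * r) := by
    intro t ht
    have htr : t * r ≤ r := by nlinarith [ht.1, ht.2]
    have htr0 : 0 ≤ t * r := mul_nonneg ht.1 hr0
    have hpos : 0 < 1 - t * r := by linarith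
    have hpos2 : 0 < 1 - (t * r) ^ 2 := by nlinarith
    have h2 := hS _ (hmem t ht)
    rw [zygS, Real.rpow_one, norm_cast_mul t w ht.1] at h2
    have h3 : ‖deriv (deriv f) ((t:ℂ) * w)‖ ≤ S / (1 - (t*r)^2) := by
      rw [le_div_iff₀ hpos2]
      calc ‖deriv (deriv f) ((t:ℂ) * w)‖ * (1 - (t*r)^2)
          = (1 - (t*r)^2) * ‖deriv (deriv f) ((t:ℂ) * w)‖ := by ring
        _ ≤ S := h2
    have h4 : S / (1 - (t*r)^2) ≤ S / (1 - t*r) := by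
      apply div_le_div_of_nonneg_left hS0 hpos
      nlinarith
    calc ‖deriv (deriv f) ((t:ℂ) * w) * w‖ = ‖deriv (deriv f) ((t:ℂ) * w)‖ * r := by
          rw [norm_mul]
      _ ≤ (S / (1 - t*r)) * r := mul_le_mul_of_nonneg_right (h3.trans h4) hr0
      _ = S * r / (1 - t*r) := by ring
  -- compute the majorant integral
  have hmaj : (∫ t in (0:ℝ)..1, S * r / (1 - t * r)) = -(S * Real.log (1 - r)) := by
    have hder : ∀ t ∈ uIcc (0:ℝ) 1,
        HasDerivAt (fun t : ℝ => -(S * Real.log (1 - t * r))) (S * r / (1 - t * r)) t := by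
      intro t ht
      rw [uIcc_of_le zero_le_one] at ht
      have htr : t * r ≤ r := by nlinarith [ht.1, ht.2]
      have hpos : 0 < 1 - t * r := by linarith
      have hu : HasDerivAt (fun t : ℝ => 1 - t * r) (-r) t := by
        simpa using ((hasDerivAt_id t).mul_const r).const_sub 1
      have hl : HasDerivAt (fun t : ℝ => Real.log (1 - t * r)) ((1 - t*r)⁻¹ * -r) t := by
        have := HasDerivAt.comp t (Real.hasDerivAt_log hpos.ne') hu
        exact this.congr_deriv (by ring)
      have := (hl.const_mul S).neg
      refine this.congr_deriv ?_
      field_simp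
    have hi : IntervalIntegrable (fun t : ℝ => S * r / (1 - t * r)) volume 0 1 := by
      apply ContinuousOn.intervalIntegrable
      rw [uIcc_of_le zero_le_one]
      apply ContinuousOn.div continuousOn_const
      · exact (continuousOn_const.sub ((continuousOn_id).mul continuousOn_const))
      · intro t ht
        have : t * r ≤ r := by nlinarith [ht.1, ht.2]
        simp only [ne_eq]
        intro hc
        nlinarith [ht.1]
    have := intervalIntegral.integral_eq_sub_of_hasDerivAt hder hi
    rw [this]
    simp [Real.log_one]
  have hintle : ‖∫ t in (0:ℝ)..1, deriv (deriv f) ((t:ℂ) * w) * w‖ ≤ -(S * Real.log (1 - r)) := by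
    refine le_trans (intervalIntegral.norm_integral_le_integral_norm zero_le_one) ?_
    rw [← hmaj]
    apply intervalIntegral.integral_mono_on zero_le_one
    · exact (hcint.norm)
    · apply ContinuousOn.intervalIntegrable
      rw [uIcc_of_le zero_le_one]
      apply ContinuousOn.div continuousOn_const
      · exact (continuousOn_const.sub ((continuousOn_id).mul continuousOn_const))
      · intro t ht
        have : t * r ≤ r := by nlinarith [ht.1, ht.2]
        intro hc
        nlinarith [ht.1]
    · exact hpt
  calc ‖deriv f w‖ = ‖deriv f 0 + ∫ t in (0:ℝ)..1, deriv (deriv f) ((t:ℂ) * w) * w‖ := by rw [← h1]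
    _ ≤ ‖deriv f 0‖ + ‖∫ t in (0:ℝ)..1, deriv (deriv f) ((t:ℂ) * w) * w‖ := norm_add_le _ _
    _ ≤ ‖deriv f 0‖ - S * Real.log (1 - r) := by linarith

lemma deriv_growth {f : ℂ → ℂ} (hfA : AnalyticOnNhd ℂ f uD) {S : ℝ}
    (hS : ∀ z ∈ uD, zygS 1 f z ≤ S) {w : ℂ} (hw : w ∈ uD) :
    ‖deriv f w‖ ≤ ‖deriv f 0‖ + S * Real.log (2 / (1 - ‖w‖ ^ 2)) := by
  have h1 := deriv_growth' hfA hS hw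
  have hS0 : 0 ≤ S := le_trans (zygS_nonneg zero_mem_uD) (hS 0 zero_mem_uD)
  have h2 := log_ineq (norm_nonneg w) (mem_uD.1 hw)
  nlinarith

lemma f_growth {f : ℂ → ℂ} (hfA : AnalyticOnNhd ℂ f uD) {S : ℝ}
    (hS : ∀ z ∈ uD, zygS 1 f z ≤ S) {w : ℂ} (hw : w ∈ uD) :
    ‖f w‖ ≤ ‖f 0‖ + ‖deriv f 0‖ + S := by
  set r := ‖w‖ with hrdef
  have hr1 : r < 1 := mem_uD.1 hw
  have hr0 : 0 ≤ r := norm_nonneg w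
  have hS0 : 0 ≤ S := le_trans (zygS_nonneg zero_mem_uD) (hS 0 zero_mem_uD)
  have hf'c : ContinuousOn (deriv f) uD := hfA.deriv.differentiableOn.continuousOn
  have hmem : ∀ t ∈ Set.Icc (0:ℝ) 1, (t:ℂ) * w ∈ uD := fun t ht => smul_mem_uD hw ht.1 ht.2
  have heq : ∀ t ∈ uIcc (0:ℝ) 1,
      HasDerivAt (fun s : ℝ => f ((s:ℂ) * w)) (deriv f ((t:ℂ) * w) * w) t := by
    intro t ht
    rw [uIcc_of_le zero_le_one] at ht
    exact hasDerivAt_radial hfA hw ht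
  have hcint : IntervalIntegrable (fun t : ℝ => deriv f ((t:ℂ) * w) * w) volume 0 1 := by
    apply ContinuousOn.intervalIntegrable
    rw [uIcc_of_le zero_le_one]
    exact (continuousOn_radial hf'c hw).mul continuousOn_const
  have hFTC := intervalIntegral.integral_eq_sub_of_hasDerivAt heq hcint
  have h1 : f w = f 0 + ∫ t in (0:ℝ)..1, deriv f ((t:ℂ) * w) * w := by
    rw [hFTC]; simp
  have hpt : ∀ t ∈ Set.Icc (0:ℝ) 1,
      ‖deriv f ((t:ℂ) * w) * w‖ ≤ (‖deriv f 0‖ - S * Real.log (1 - t * r)) * r := by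
    intro t ht
    have h2 := deriv_growth' hfA hS (hmem t ht)
    rw [norm_cast_mul t w ht.1] at h2
    rw [norm_mul]
    exact mul_le_mul_of_nonneg_right h2 hr0
  have hmaj : (∫ t in (0:ℝ)..1, (‖deriv f 0‖ - S * Real.log (1 - t * r)) * r)
      = r * ‖deriv f 0‖ - S * ((1 - r) * (1 - Real.log (1 - r))) + S := by
    have hder : ∀ t ∈ uIcc (0:ℝ) 1,
        HasDerivAt (fun t : ℝ => t * (r * ‖deriv f 0‖) - S * ((1 - t * r) * (1 - Real.log (1 - t * r))))
          ((‖deriv f 0‖ - S * Real.log (1 - t * r)) * r) t := by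
      intro t ht
      rw [uIcc_of_le zero_le_one] at ht
      have htr : t * r ≤ r := by nlinarith [ht.1, ht.2]
      have hpos : 0 < 1 - t * r := by linarith
      have hu : HasDerivAt (fun t : ℝ => 1 - t * r) (-r) t := by
        simpa using ((hasDerivAt_id t).mul_const r).const_sub 1
      have hl : HasDerivAt (fun t : ℝ => Real.log (1 - t * r)) ((1 - t*r)⁻¹ * -r) t := by
        have := HasDerivAt.comp t (Real.hasDerivAt_log hpos.ne') hu
        exact this.congr_deriv (by ring)
      have hb : HasDerivAt (fun t : ℝ => (1 - t * r) * (1 - Real.log (1 - t * r)))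
          (r * Real.log (1 - t * r)) t := by
        have := hu.mul ((hasDerivAt_const t (1:ℝ)).sub hl)
        refine this.congr_deriv ?_
        simp only [Pi.sub_apply]
        linear_combination r * mul_inv_cancel₀ hpos.ne'
      have := (hasDerivAt_mul_const (r * ‖deriv f 0‖)).sub (hb.const_mul S)
      refine this.congr_deriv ?_
      ring
    have hi : IntervalIntegrable (fun t : ℝ => (‖deriv f 0‖ - S * Real.log (1 - t * r)) * r)
        volume 0 1 := by
      apply ContinuousOn.intervalIntegrable
      rw [uIcc_of_le zero_le_one]
      apply ContinuousOn.mul _ continuousOn_const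
      apply ContinuousOn.sub continuousOn_const
      apply ContinuousOn.mul continuousOn_const
      apply ContinuousOn.log
      · exact (continuousOn_const.sub ((continuousOn_id).mul continuousOn_const))
      · intro t ht
        have : t * r ≤ r := by nlinarith [ht.1, ht.2]
        intro hc
        nlinarith [ht.1]
    have := intervalIntegral.integral_eq_sub_of_hasDerivAt hder hi
    rw [this]
    simp [Real.log_one]
  have hintle : ‖∫ t in (0:ℝ)..1, deriv f ((t:ℂ) * w) * w‖ ≤ ‖deriv f 0‖ + S := by
    refine le_trans (intervalIntegral.norm_integral_le_integral_norm zero_le_one) ?_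
    have step : (∫ t in (0:ℝ)..1, ‖deriv f ((t:ℂ) * w) * w‖)
        ≤ ∫ t in (0:ℝ)..1, (‖deriv f 0‖ - S * Real.log (1 - t * r)) * r := by
      apply intervalIntegral.integral_mono_on zero_le_one
      · exact hcint.norm
      · apply ContinuousOn.intervalIntegrable
        rw [uIcc_of_le zero_le_one]
        apply ContinuousOn.mul _ continuousOn_const
        apply ContinuousOn.sub continuousOn_const
        apply ContinuousOn.mul continuousOn_const
        apply ContinuousOn.log
        · exact (continuousOn_const.sub ((continuousOn_id).mul continuousOn_const))
        · intro t ht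
          have : t * r ≤ r := by nlinarith [ht.1, ht.2]
          intro hc
          nlinarith [ht.1]
      · exact hpt
    rw [hmaj] at step
    have hlog : Real.log (1 - r) ≤ 0 := Real.log_nonpos (by linarith) (by linarith)
    have hfin : (0:ℝ) ≤ S * ((1 - r) * (1 - Real.log (1 - r))) :=
      mul_nonneg hS0 (mul_nonneg (by linarith) (by linarith))
    have : r * ‖deriv f 0‖ ≤ ‖deriv f 0‖ := by nlinarith [norm_nonneg (deriv f 0)]
    linarith
  calc ‖f w‖ = ‖f 0 + ∫ t in (0:ℝ)..1, deriv f ((t:ℂ) * w) * w‖ := by rw [← h1]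
    _ ≤ ‖f 0‖ + ‖∫ t in (0:ℝ)..1, deriv f ((t:ℂ) * w) * w‖ := norm_add_le _ _
    _ ≤ ‖f 0‖ + ‖deriv f 0‖ + S := by linarith

/-! ### second derivative of the inner function -/

lemma deriv_inner {f φ g : ℂ → ℂ} (hfA : AnalyticOnNhd ℂ f uD) (hφA : AnalyticOnNhd ℂ φ uD)
    (hφm : Set.MapsTo φ uD uD) (hgA : AnalyticOnNhd ℂ g uD) {z : ℂ} (hz : z ∈ uD) :
    deriv (fun w => f (φ w) * deriv g w) z
      = deriv f (φ z) * deriv φ z * deriv g z + f (φ z) * deriv (deriv g) z := by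
  have h1 : HasDerivAt (fun w => f (φ w)) (deriv f (φ z) * deriv φ z) z := by
    have := HasDerivAt.comp z ((hfA _ (hφm hz)).differentiableAt.hasDerivAt)
      ((hφA z hz).differentiableAt.hasDerivAt)
    exact this
  have h2 : HasDerivAt (deriv g) (deriv (deriv g) z) z :=
    ((hgA.deriv) z hz).differentiableAt.hasDerivAt
  exact (h1.mul h2).deriv

/-! ### test functions -/

def testF (a : ℂ) : ℂ → ℂ := fun z =>
  z * Complex.log 2 +
    (1 - (1 - (starRingEnd ℂ) a * z) * (1 - Complex.log (1 - (starRingEnd ℂ) a * z))) /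
      (starRingEnd ℂ) a

lemma one_sub_conj_mul_slit {a z : ℂ} (ha : ‖a‖ ≤ 1) (hz : ‖z‖ < 1) :
    1 - (starRingEnd ℂ) a * z ∈ Complex.slitPlane := by
  rw [Complex.mem_slitPlane_iff]
  left
  have h1 : ((starRingEnd ℂ) a * z).re ≤ ‖(starRingEnd ℂ) a * z‖ := by
    exact Complex.re_le_norm _
  have h2 : ‖(starRingEnd ℂ) a * z‖ = ‖a‖ * ‖z‖ := by
    rw [norm_mul, RCLike.norm_conj]
  have h3 : ‖a‖ * ‖z‖ < 1 := by nlinarith [norm_nonneg z, norm_nonneg a]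
  have : (1 - (starRingEnd ℂ) a * z).re = 1 - ((starRingEnd ℂ) a * z).re := by
    simp [Complex.sub_re]
  rw [this]
  nlinarith

lemma one_sub_conj_mul_ne {a z : ℂ} (ha : ‖a‖ ≤ 1) (hz : ‖z‖ < 1) :
    1 - (starRingEnd ℂ) a * z ≠ 0 :=
  Complex.slitPlane_ne_zero (one_sub_conj_mul_slit ha hz)

lemma norm_one_sub_conj_mul {a z : ℂ} (ha : ‖a‖ ≤ 1) (hz : ‖z‖ < 1) :
    1 - ‖z‖ ≤ ‖1 - (starRingEnd ℂ) a * z‖ := by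
  have h1 : ‖(1:ℂ)‖ - ‖(starRingEnd ℂ) a * z‖ ≤ ‖1 - (starRingEnd ℂ) a * z‖ :=
    norm_sub_norm_le _ _
  have h2 : ‖(starRingEnd ℂ) a * z‖ = ‖a‖ * ‖z‖ := by rw [norm_mul, RCLike.norm_conj]
  have h3 : ‖a‖ * ‖z‖ ≤ ‖z‖ := by nlinarith [norm_nonneg z, norm_nonneg a]
  simp only [norm_one] at h1
  linarith

lemma testF_hasDerivAt {a : ℂ} (ha : ‖a‖ < 1) (ha0 : a ≠ 0) {z : ℂ} (hz : ‖z‖ < 1) :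
    HasDerivAt (testF a)
      (Complex.log 2 - Complex.log (1 - (starRingEnd ℂ) a * z)) z := by
  set c := (starRingEnd ℂ) a with hc
  have hc0 : c ≠ 0 := by
    intro h
    apply ha0
    have := congrArg (starRingEnd ℂ) h
    simpa [hc] using this
  have hslit := one_sub_conj_mul_slit ha.le hz
  have hne := one_sub_conj_mul_ne ha.le hz
  have hu : HasDerivAt (fun z : ℂ => 1 - c * z) (-c) z := by
    simpa using ((hasDerivAt_id z).const_mul c).const_sub 1
  have hlog : HasDerivAt (fun z : ℂ => Complex.log (1 - c * z)) ((1 - c * z)⁻¹ * -c) z := by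
    have := HasDerivAt.comp z (Complex.hasDerivAt_log hslit) hu
    exact this.congr_deriv (by ring)
  have hmain : HasDerivAt (fun z : ℂ => (1 - c * z) * (1 - Complex.log (1 - c * z)))
      (c * Complex.log (1 - c * z)) z := by
    have := hu.mul ((hasDerivAt_const z (1:ℂ)).sub hlog)
    refine this.congr_deriv ?_
    simp only [Pi.sub_apply]
    linear_combination c * mul_inv_cancel₀ (show 1 - c * z ≠ 0 from hne)
  have htot := (hasDerivAt_mul_const (Complex.log 2)).add
    (((hasDerivAt_const z (1:ℂ)).sub hmain).div_const c)
  have : testF a = fun z : ℂ =>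
      z * Complex.log 2 + (1 - (1 - c * z) * (1 - Complex.log (1 - c * z))) / c := rfl
  rw [this]
  refine htot.congr_deriv ?_
  field_simp
  ring

lemma testF_analyticOnNhd {a : ℂ} (ha : ‖a‖ < 1) (ha0 : a ≠ 0) :
    AnalyticOnNhd ℂ (testF a) uD := by
  apply DifferentiableOn.analyticOnNhd _ isOpen_uD
  exact fun z hz =>
    ((testF_hasDerivAt ha ha0 (mem_uD.1 hz)).differentiableAt).differentiableWithinAt

lemma testF_deriv {a : ℂ} (ha : ‖a‖ < 1) (ha0 : a ≠ 0) {z : ℂ} (hz : ‖z‖ < 1) :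
    deriv (testF a) z = Complex.log 2 - Complex.log (1 - (starRingEnd ℂ) a * z) :=
  (testF_hasDerivAt ha ha0 hz).deriv

lemma testF_deriv2 {a : ℂ} (ha : ‖a‖ < 1) (ha0 : a ≠ 0) {z : ℂ} (hz : z ∈ uD) :
    deriv (deriv (testF a)) z
      = (starRingEnd ℂ) a * (1 - (starRingEnd ℂ) a * z)⁻¹ := by
  set c := (starRingEnd ℂ) a with hc
  have heq : deriv (testF a) =ᶠ[nhds z]
      (fun w => Complex.log 2 - Complex.log (1 - c * w)) := by
    filter_upwards [isOpen_uD.mem_nhds hz] with w hw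
    exact testF_deriv ha ha0 (mem_uD.1 hw)
  rw [heq.deriv_eq]
  have hslit := one_sub_conj_mul_slit ha.le (mem_uD.1 hz)
  have hu : HasDerivAt (fun w : ℂ => 1 - c * w) (-c) z := by
    simpa using ((hasDerivAt_id z).const_mul c).const_sub 1
  have hlog : HasDerivAt (fun w : ℂ => Complex.log (1 - c * w)) ((1 - c * z)⁻¹ * -c) z := by
    have := HasDerivAt.comp z (Complex.hasDerivAt_log hslit) hu
    exact this.congr_deriv (by ring)
  have := ((hasDerivAt_const z (Complex.log 2)).sub hlog).deriv
  refine this.trans ?_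
  ring

lemma testF_zygS {a : ℂ} (ha : ‖a‖ < 1) (ha0 : a ≠ 0) {z : ℂ} (hz : z ∈ uD) :
    zygS 1 (testF a) z ≤ 2 := by
  have hz1 : ‖z‖ < 1 := mem_uD.1 hz
  rw [zygS, Real.rpow_one, testF_deriv2 ha ha0 hz]
  have hne := one_sub_conj_mul_ne ha.le hz1
  have hlb := norm_one_sub_conj_mul ha.le hz1
  have hpos : 0 < ‖1 - (starRingEnd ℂ) a * z‖ := norm_pos_iff.2 hne
  rw [norm_mul, RCLike.norm_conj, norm_inv]
  have hgoal : (1 - ‖z‖^2) * (‖a‖ * ‖1 - (starRingEnd ℂ) a * z‖⁻¹) ≤ 2 ↔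
      (1 - ‖z‖^2) * ‖a‖ ≤ 2 * ‖1 - (starRingEnd ℂ) a * z‖ := by
    rw [mul_comm ‖a‖ _, ← mul_assoc, ← div_eq_mul_inv, div_mul_eq_mul_div, div_le_iff₀ hpos]
  rw [hgoal]
  have hb1 : (1 - ‖z‖^2) * ‖a‖ ≤ 1 - ‖z‖^2 :=
    mul_le_of_le_one_right (by nlinarith [norm_nonneg z]) ha.le
  have hb2 : 1 - ‖z‖^2 ≤ 2 * (1 - ‖z‖) := by nlinarith [norm_nonneg z]
  linarith

lemma testF_memZ {a : ℂ} (ha : ‖a‖ < 1) (ha0 : a ≠ 0) : memZ 1 (testF a) :=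
  ⟨(isOpen_uD.analyticOn_iff_analyticOnNhd).2 (testF_analyticOnNhd ha ha0),
    2, fun z hz => testF_zygS ha ha0 hz⟩

lemma conj_mul_self (a : ℂ) : (starRingEnd ℂ) a * a = ((‖a‖^2 : ℝ) : ℂ) := by
  rw [mul_comm, Complex.mul_conj, Complex.normSq_eq_norm_sq]

lemma log_two_complex : Complex.log 2 = ((Real.log 2 : ℝ) : ℂ) := by
  have h : ((2:ℝ):ℂ) = (2:ℂ) := by norm_num
  rw [← h, ← Complex.ofReal_log (by norm_num : (0:ℝ) ≤ 2)]

lemma testF_deriv_at_self {a : ℂ} (ha : ‖a‖ < 1) (ha0 : a ≠ 0) :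
    ‖deriv (testF a) a‖ = Real.log (2 / (1 - ‖a‖^2)) := by
  have hpos : (0:ℝ) < 1 - ‖a‖^2 := by nlinarith [norm_nonneg a]
  have hL : Real.log (1 - ‖a‖^2) ≤ 0 := Real.log_nonpos (by nlinarith) (by nlinarith [norm_nonneg a])
  have hlog2 : (0:ℝ) ≤ Real.log 2 := Real.log_nonneg one_le_two
  have hnn : 0 ≤ Real.log 2 - Real.log (1 - ‖a‖^2) := by linarith
  have hval : Real.log 2 - Real.log (1 - ‖a‖^2) = Real.log (2/(1-‖a‖^2)) :=
    (Real.log_div (by norm_num) hpos.ne').symm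
  have h1 : (1 : ℂ) - (starRingEnd ℂ) a * a = (((1 - ‖a‖^2 : ℝ)) : ℂ) := by
    rw [conj_mul_self]; push_cast; ring
  rw [testF_deriv ha ha0 ha, h1, ← Complex.ofReal_log hpos.le, log_two_complex,
    ← Complex.ofReal_sub, Complex.norm_real, Real.norm_eq_abs, _root_.abs_of_nonneg hnn, hval]

lemma testF_apply_zero (a : ℂ) : testF a 0 = 0 := by
  simp [testF, Complex.log_one]

lemma testF_deriv_zero {a : ℂ} (ha : ‖a‖ < 1) (ha0 : a ≠ 0) :
    ‖deriv (testF a) 0‖ = Real.log 2 := by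
  rw [testF_deriv ha ha0 (by simp), mul_zero, sub_zero, Complex.log_one, sub_zero,
    log_two_complex, Complex.norm_real, Real.norm_eq_abs,
    _root_.abs_of_nonneg (Real.log_nonneg one_le_two)]

lemma testF_zNorm {a : ℂ} (ha : ‖a‖ < 1) (ha0 : a ≠ 0) :
    zNorm 1 (testF a) ≤ Real.log 2 + 2 := by
  have h1 : sSup (zygS 1 (testF a) '' uD) ≤ 2 :=
    Real.sSup_le (by rintro x ⟨w, hw, rfl⟩; exact testF_zygS ha ha0 hw) (by norm_num)
  unfold zNorm
  rw [testF_apply_zero, testF_deriv_zero ha ha0]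
  simp only [norm_zero]
  linarith

lemma testF_apply_self {a : ℂ} (ha : ‖a‖ < 1) (ha0 : a ≠ 0) :
    ‖testF a a‖ ≤ Real.log 2 + 2 := by
  set r := ‖a‖ with hrdef
  have hr0 : 0 < r := norm_pos_iff.2 ha0
  have hr1 : r < 1 := ha
  have hy : (0:ℝ) < 1 - r^2 := by nlinarith
  have hy1 : 1 - r^2 ≤ 1 := by nlinarith
  have h1 : (1:ℂ) - (starRingEnd ℂ) a * a = (((1 - r^2 : ℝ)) : ℂ) := by
    rw [conj_mul_self]; push_cast; ring
  have hnum : (1:ℂ) - (1 - (starRingEnd ℂ) a * a) * (1 - Complex.log (1 - (starRingEnd ℂ) a * a))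
      = (((1 - (1 - r^2) * (1 - Real.log (1 - r^2)) : ℝ)) : ℂ) := by
    rw [h1, ← Complex.ofReal_log hy.le]
    push_cast
    ring
  have hL : Real.log (1 - r^2) ≤ 0 := Real.log_nonpos (by nlinarith) hy1
  have hkey : (1 - r^2) * (-Real.log (1 - r^2)) ≤ r^2 := by
    have h2 := Real.log_le_sub_one_of_pos (inv_pos.2 hy)
    rw [Real.log_inv] at h2
    have h3 : (1 - r^2) * (-Real.log (1-r^2)) ≤ (1 - r^2) * ((1-r^2)⁻¹ - 1) :=
      mul_le_mul_of_nonneg_left h2 hy.le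
    rw [mul_sub, mul_inv_cancel₀ hy.ne'] at h3
    nlinarith
  have habs : |1 - (1 - r^2) * (1 - Real.log (1 - r^2))| ≤ 2 * r^2 := by
    rw [abs_le]
    constructor <;> nlinarith
  have hexpand : testF a a = a * Complex.log 2 +
      (((1 - (1 - r^2) * (1 - Real.log (1 - r^2)) : ℝ)) : ℂ) / (starRingEnd ℂ) a := by
    rw [testF, ← hnum]
  rw [hexpand]
  have hlog2 : (0:ℝ) ≤ Real.log 2 := Real.log_nonneg one_le_two
  have e1 : ‖a * Complex.log 2‖ ≤ Real.log 2 := by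
    rw [norm_mul, log_two_complex, Complex.norm_real, Real.norm_eq_abs, _root_.abs_of_nonneg hlog2]
    nlinarith
  have e2 : ‖(((1 - (1 - r^2) * (1 - Real.log (1 - r^2)) : ℝ)) : ℂ) / (starRingEnd ℂ) a‖ ≤ 2 := by
    rw [norm_div, Complex.norm_real, RCLike.norm_conj, Real.norm_eq_abs]
    rw [div_le_iff₀ hr0]
    nlinarith
  calc ‖a * Complex.log 2 + (((1 - (1 - r^2) * (1 - Real.log (1 - r^2)) : ℝ)) : ℂ) / (starRingEnd ℂ) a‖
      ≤ ‖a * Complex.log 2‖ + ‖(((1 - (1 - r^2) * (1 - Real.log (1 - r^2)) : ℝ)) : ℂ) / (starRingEnd ℂ) a‖ :=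
        norm_add_le _ _
    _ ≤ Real.log 2 + 2 := add_le_add e1 e2

theorem stmt_12 (α β : ℝ) (hα : α = 1) (hβ : 0 < β)
    (φ g : ℂ → ℂ) (hφ : AnalyticOn ℂ φ uD) (hφm : Set.MapsTo φ uD uD)
    (hg : AnalyticOn ℂ g uD) :
    boundedOp 1 β (UgCphi g φ) ↔
      (memHv β (deriv (deriv g)) ∧ (∃ M : ℝ, ∀ z ∈ uD, (1 - ‖z‖ ^ 2) ^ β * Real.log (2 / (1 - ‖φ z‖ ^ 2)) * ‖deriv g z * deriv φ z‖ ≤ M)) := by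
  have hφN : AnalyticOnNhd ℂ φ uD := (isOpen_uD.analyticOn_iff_analyticOnNhd).1 hφ
  have hgN : AnalyticOnNhd ℂ g uD := (isOpen_uD.analyticOn_iff_analyticOnNhd).1 hg
  have hg'N : AnalyticOnNhd ℂ (deriv g) uD := hgN.deriv
  have hP0 : ∀ z : ℂ, z ∈ uD → (0:ℝ) ≤ (1 - ‖z‖^2)^β := by
    intro z hz
    apply Real.rpow_nonneg
    nlinarith [mem_uD.1 hz, norm_nonneg z]
  have hlog2 : (0:ℝ) < Real.log 2 := Real.log_pos one_lt_two
  constructor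
  · rintro ⟨hmap, C, hC0, hbound⟩
    -- constant test function
    have hone : memZ 1 (fun _ : ℂ => (1:ℂ)) := by
      refine ⟨analyticOn_const, 0, fun z hz => ?_⟩
      simp [zygS]
    have hT1 : UgCphi g φ (fun _ : ℂ => (1:ℂ))
        = fun w => ∫ t in (0:ℝ)..1, w * deriv g ((t:ℂ) * w) := by
      funext w
      simp only [UgCphi, one_mul]
    obtain ⟨M₀, hM₀⟩ := (hmap _ hone).2
    have hM₀0 : (0:ℝ) ≤ M₀ := le_trans (zygS_nonneg zero_mem_uD) (hM₀ 0 zero_mem_uD)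
    have hg''bound : ∀ z ∈ uD, (1 - ‖z‖^2)^β * ‖deriv (deriv g) z‖ ≤ M₀ := by
      intro z hz
      have h2 := hM₀ z hz
      rw [zygS, hT1, primitive_deriv2 hg'N hz] at h2
      exact h2
    refine ⟨⟨M₀, hg''bound⟩, ?_⟩
    -- identity test function
    have hidN : AnalyticOnNhd ℂ (fun w : ℂ => w) uD :=
      (differentiable_id.differentiableOn).analyticOnNhd isOpen_uD
    have hid : memZ 1 (fun w : ℂ => w) := by
      refine ⟨(isOpen_uD.analyticOn_iff_analyticOnNhd).2 hidN, 0, fun z hz => ?_⟩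
      simp [zygS]
    obtain ⟨Mid, hMid⟩ := (hmap _ hid).2
    have hMid0 : (0:ℝ) ≤ Mid := le_trans (zygS_nonneg zero_mem_uD) (hMid 0 zero_mem_uD)
    refine ⟨Real.log 2 * Mid + (C * (Real.log 2 + 2) + (Real.log 2 + 2) * M₀), ?_⟩
    intro z hz
    have hz1 : ‖z‖ < 1 := mem_uD.1 hz
    have haD : φ z ∈ uD := hφm hz
    have ha1 : ‖φ z‖ < 1 := mem_uD.1 haD
    by_cases ha0 : φ z = 0
    · -- case φ z = 0 : use the identity test function
      have h2 := hMid z hz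
      have hTid : UgCphi g φ (fun w : ℂ => w)
          = fun w => ∫ t in (0:ℝ)..1,
              w * ((fun u => (fun w : ℂ => w) (φ u) * deriv g u) ((t:ℂ) * w)) := rfl
      have hinnerId : AnalyticOnNhd ℂ (fun u => (fun w : ℂ => w) (φ u) * deriv g u) uD :=
        (hidN.comp hφN hφm).mul hg'N
      rw [zygS, hTid, primitive_deriv2 hinnerId hz,
        deriv_inner hidN hφN hφm hgN hz] at h2
      simp only [deriv_id'', one_mul, ha0, zero_mul, add_zero] at h2
      rw [ha0]
      simp only [norm_zero]
      have hlog : Real.log (2 / (1 - 0^2)) = Real.log 2 := by norm_num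
      rw [hlog]
      have hnorm : ‖deriv g z * deriv φ z‖ = ‖deriv φ z * deriv g z‖ := by
        rw [norm_mul, norm_mul]; ring
      have step : (1 - ‖z‖^2)^β * Real.log 2 * ‖deriv g z * deriv φ z‖
          = Real.log 2 * ((1 - ‖z‖^2)^β * ‖deriv φ z * deriv g z‖) := by
        rw [hnorm]; ring
      rw [step]
      have h3 : Real.log 2 * ((1 - ‖z‖^2)^β * ‖deriv φ z * deriv g z‖) ≤ Real.log 2 * Mid :=
        mul_le_mul_of_nonneg_left h2 hlog2.le
      nlinarith [hC0, Real.log_nonneg (show (1:ℝ) ≤ 2 by norm_num)]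
    · -- case φ z ≠ 0 : use the test function testF (φ z)
      set a := φ z with hadef
      have hFmem := testF_memZ ha1 ha0
      have hFN := testF_analyticOnNhd ha1 ha0
      have hinner : AnalyticOnNhd ℂ (fun w => testF a (φ w) * deriv g w) uD :=
        (hFN.comp hφN hφm).mul hg'N
      have hTF : UgCphi g φ (testF a)
          = fun w => ∫ t in (0:ℝ)..1,
              w * ((fun u => testF a (φ u) * deriv g u) ((t:ℂ) * w)) := rfl
      have hkey := zygS_le_zNorm (hmap _ hFmem) hz
      have hb := hbound _ hFmem
      have hzn := testF_zNorm ha1 ha0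
      have hCz : zNorm β (UgCphi g φ (testF a)) ≤ C * (Real.log 2 + 2) :=
        le_trans hb (mul_le_mul_of_nonneg_left hzn hC0.le)
      have hexp : zygS β (UgCphi g φ (testF a)) z
          = (1-‖z‖^2)^β * ‖deriv (testF a) a * deriv φ z * deriv g z
              + testF a a * deriv (deriv g) z‖ := by
        rw [zygS, hTF, primitive_deriv2 hinner hz, deriv_inner hFN hφN hφm hgN hz]
      set X := deriv (testF a) a * deriv φ z * deriv g z with hXdef
      set Y := testF a a * deriv (deriv g) z with hYdef
      have hXnorm : ‖X‖ = Real.log (2/(1-‖a‖^2)) * ‖deriv g z * deriv φ z‖ := by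
        rw [hXdef, norm_mul, norm_mul, norm_mul, testF_deriv_at_self ha1 ha0]
        ring
      have hYbound : (1-‖z‖^2)^β * ‖Y‖ ≤ (Real.log 2 + 2) * M₀ := by
        rw [hYdef, norm_mul]
        calc (1-‖z‖^2)^β * (‖testF a a‖ * ‖deriv (deriv g) z‖)
            = ‖testF a a‖ * ((1-‖z‖^2)^β * ‖deriv (deriv g) z‖) := by ring
          _ ≤ (Real.log 2 + 2) * M₀ := by
              apply mul_le_mul (testF_apply_self ha1 ha0) (hg''bound z hz)
                (mul_nonneg (hP0 z hz) (norm_nonneg _)) (by linarith)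
      have h3 : ‖X‖ ≤ ‖X + Y‖ + ‖Y‖ := by
        calc ‖X‖ = ‖X + Y - Y‖ := by rw [add_sub_cancel_right]
          _ ≤ ‖X + Y‖ + ‖Y‖ := norm_sub_le _ _
      calc (1-‖z‖^2)^β * Real.log (2/(1-‖a‖^2)) * ‖deriv g z * deriv φ z‖
          = (1-‖z‖^2)^β * ‖X‖ := by rw [hXnorm]; ring
        _ ≤ (1-‖z‖^2)^β * (‖X + Y‖ + ‖Y‖) := mul_le_mul_of_nonneg_left h3 (hP0 z hz)
        _ = (1-‖z‖^2)^β * ‖X + Y‖ + (1-‖z‖^2)^β * ‖Y‖ := by ring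
        _ ≤ C * (Real.log 2 + 2) + (Real.log 2 + 2) * M₀ := by
            rw [← hexp] at *
            exact add_le_add (le_trans hkey hCz) hYbound
        _ ≤ Real.log 2 * Mid + (C * (Real.log 2 + 2) + (Real.log 2 + 2) * M₀) := by
            nlinarith [hlog2.le, hMid0]
  · rintro ⟨⟨M₁, hM₁⟩, M₂, hM₂⟩
    set M₁' := max M₁ 0 with hM₁'def
    set M₂' := max M₂ 0 with hM₂'def
    have hM₁'0 : (0:ℝ) ≤ M₁' := le_max_right _ _
    have hM₂'0 : (0:ℝ) ≤ M₂' := le_max_right _ _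
    set K := (1/Real.log 2 + 1) * M₂' + M₁' with hKdef
    have hK0 : (0:ℝ) ≤ K := by
      have h6 : (0:ℝ) < 1/Real.log 2 := one_div_pos.2 hlog2
      have := mul_nonneg (by linarith : (0:ℝ) ≤ 1/Real.log 2 + 1) hM₂'0
      rw [hKdef]; linarith
    have hcore : ∀ f : ℂ → ℂ, memZ 1 f → ∀ z ∈ uD,
        zygS β (UgCphi g φ f) z ≤ zNorm 1 f * K := by
      intro f hf z hz
      have hfN : AnalyticOnNhd ℂ f uD := (isOpen_uD.analyticOn_iff_analyticOnNhd).1 hf.1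
      have hS : ∀ w ∈ uD, zygS 1 f w ≤ sSup (zygS 1 f '' uD) := fun w hw => zygS_le_sSup hf hw
      set S := sSup (zygS 1 f '' uD) with hSdef
      have hS0 : (0:ℝ) ≤ S := sSup_zygS_nonneg 1 f
      have hQ : zNorm 1 f = ‖f 0‖ + ‖deriv f 0‖ + S := rfl
      have hQ0 : (0:ℝ) ≤ zNorm 1 f := zNorm_nonneg 1 f
      have hf'0Q : ‖deriv f 0‖ ≤ zNorm 1 f := by
        rw [hQ]; linarith [norm_nonneg (f 0), hS0]
      have hSQ : S ≤ zNorm 1 f := by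
        rw [hQ]; linarith [norm_nonneg (f 0), norm_nonneg (deriv f 0)]
      have haD : φ z ∈ uD := hφm hz
      have hinner : AnalyticOnNhd ℂ (fun w => f (φ w) * deriv g w) uD :=
        (hfN.comp hφN hφm).mul hg'N
      have hTF : UgCphi g φ f
          = fun w => ∫ t in (0:ℝ)..1,
              w * ((fun u => f (φ u) * deriv g u) ((t:ℂ)*w)) := rfl
      have hexp : zygS β (UgCphi g φ f) z
          = (1-‖z‖^2)^β * ‖deriv f (φ z) * deriv φ z * deriv g z
              + f (φ z) * deriv (deriv g) z‖ := by
        rw [zygS, hTF, primitive_deriv2 hinner hz, deriv_inner hfN hφN hφm hgN hz]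
      set L := Real.log (2/(1-‖φ z‖^2)) with hLdef
      have ha1 : ‖φ z‖ < 1 := mem_uD.1 haD
      have hL2 : Real.log 2 ≤ L := by
        rw [hLdef]
        apply Real.log_le_log (by norm_num)
        rw [le_div_iff₀ (by nlinarith [norm_nonneg (φ z)])]
        nlinarith [norm_nonneg (φ z)]
      have hL0 : (0:ℝ) ≤ L := le_trans hlog2.le hL2
      have hA : ‖deriv f (φ z)‖ ≤ (zNorm 1 f / Real.log 2 + zNorm 1 f) * L := by
        have h4 := deriv_growth hfN hS haD
        have h5 : ‖deriv f 0‖ ≤ (‖deriv f 0‖/Real.log 2) * L := by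
          rw [div_mul_eq_mul_div, le_div_iff₀ hlog2]
          exact mul_le_mul_of_nonneg_left hL2 (norm_nonneg _)
        have h6 : S * L ≤ zNorm 1 f * L := mul_le_mul_of_nonneg_right hSQ hL0
        have h7 : ‖deriv f 0‖/Real.log 2 ≤ zNorm 1 f / Real.log 2 :=
          (div_le_div_iff_of_pos_right hlog2).2 hf'0Q
        have h8 := mul_le_mul_of_nonneg_right h7 hL0
        calc ‖deriv f (φ z)‖ ≤ ‖deriv f 0‖ + S * L := h4
          _ ≤ (‖deriv f 0‖/Real.log 2) * L + zNorm 1 f * L := add_le_add h5 h6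
          _ ≤ (zNorm 1 f / Real.log 2) * L + zNorm 1 f * L := by linarith
          _ = (zNorm 1 f / Real.log 2 + zNorm 1 f) * L := by ring
      have hB : ‖f (φ z)‖ ≤ zNorm 1 f := by
        rw [hQ]; exact f_growth hfN hS haD
      have hM2z : (1-‖z‖^2)^β * L * ‖deriv g z * deriv φ z‖ ≤ M₂' :=
        le_trans (hM₂ z hz) (le_max_left _ _)
      have hM1z : (1-‖z‖^2)^β * ‖deriv (deriv g) z‖ ≤ M₁' :=
        le_trans (hM₁ z hz) (le_max_left _ _)
      rw [hexp]
      have hsplit : ‖deriv f (φ z) * deriv φ z * deriv g z + f (φ z) * deriv (deriv g) z‖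
          ≤ ‖deriv f (φ z)‖ * ‖deriv g z * deriv φ z‖ + ‖f (φ z)‖ * ‖deriv (deriv g) z‖ := by
        refine le_trans (norm_add_le _ _) (le_of_eq ?_)
        rw [norm_mul, norm_mul, norm_mul, norm_mul]
        ring
      have hPz := hP0 z hz
      have hdivQ : (0:ℝ) ≤ zNorm 1 f / Real.log 2 := div_nonneg hQ0 hlog2.le
      have t1 : (1-‖z‖^2)^β * (‖deriv f (φ z)‖ * ‖deriv g z * deriv φ z‖)
          ≤ (zNorm 1 f / Real.log 2 + zNorm 1 f) * M₂' := by
        calc (1-‖z‖^2)^β * (‖deriv f (φ z)‖ * ‖deriv g z * deriv φ z‖)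
            ≤ (1-‖z‖^2)^β * (((zNorm 1 f / Real.log 2 + zNorm 1 f) * L)
                * ‖deriv g z * deriv φ z‖) :=
              mul_le_mul_of_nonneg_left
                (mul_le_mul_of_nonneg_right hA (norm_nonneg _)) hPz
          _ = (zNorm 1 f / Real.log 2 + zNorm 1 f)
              * ((1-‖z‖^2)^β * L * ‖deriv g z * deriv φ z‖) := by ring
          _ ≤ (zNorm 1 f / Real.log 2 + zNorm 1 f) * M₂' :=
              mul_le_mul_of_nonneg_left hM2z (by linarith)
      have t2 : (1-‖z‖^2)^β * (‖f (φ z)‖ * ‖deriv (deriv g) z‖) ≤ zNorm 1 f * M₁' := by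
        calc (1-‖z‖^2)^β * (‖f (φ z)‖ * ‖deriv (deriv g) z‖)
            = ‖f (φ z)‖ * ((1-‖z‖^2)^β * ‖deriv (deriv g) z‖) := by ring
          _ ≤ zNorm 1 f * M₁' :=
              mul_le_mul hB hM1z (mul_nonneg hPz (norm_nonneg _)) hQ0
      calc (1-‖z‖^2)^β * ‖deriv f (φ z) * deriv φ z * deriv g z + f (φ z) * deriv (deriv g) z‖
          ≤ (1-‖z‖^2)^β * (‖deriv f (φ z)‖ * ‖deriv g z * deriv φ z‖
              + ‖f (φ z)‖ * ‖deriv (deriv g) z‖) :=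
            mul_le_mul_of_nonneg_left hsplit hPz
        _ = (1-‖z‖^2)^β * (‖deriv f (φ z)‖ * ‖deriv g z * deriv φ z‖)
            + (1-‖z‖^2)^β * (‖f (φ z)‖ * ‖deriv (deriv g) z‖) := by ring
        _ ≤ (zNorm 1 f / Real.log 2 + zNorm 1 f) * M₂' + zNorm 1 f * M₁' := add_le_add t1 t2
        _ = zNorm 1 f * K := by
            rw [hKdef, div_eq_mul_inv, one_div]
            ring
    have hmemZ : ∀ f, memZ 1 f → memZ β (UgCphi g φ f) := by
      intro f hf
      have hfN : AnalyticOnNhd ℂ f uD := (isOpen_uD.analyticOn_iff_analyticOnNhd).1 hf.1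
      have hinner : AnalyticOnNhd ℂ (fun w => f (φ w) * deriv g w) uD :=
        (hfN.comp hφN hφm).mul hg'N
      exact ⟨primitive_analyticOn hinner, zNorm 1 f * K, hcore f hf⟩
    refine ⟨hmemZ, ‖deriv g 0‖ + K + 1, by positivity, ?_⟩
    intro f hf
    have hfN : AnalyticOnNhd ℂ f uD := (isOpen_uD.analyticOn_iff_analyticOnNhd).1 hf.1
    have hinner : AnalyticOnNhd ℂ (fun w => f (φ w) * deriv g w) uD :=
      (hfN.comp hφN hφm).mul hg'N
    have hS : ∀ w ∈ uD, zygS 1 f w ≤ sSup (zygS 1 f '' uD) := fun w hw => zygS_le_sSup hf hw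
    have hT0 : UgCphi g φ f 0 = 0 := by
      simp [UgCphi]
    have hTF : UgCphi g φ f
        = fun w => ∫ t in (0:ℝ)..1,
            w * ((fun u => f (φ u) * deriv g u) ((t:ℂ)*w)) := rfl
    have hTd0 : deriv (UgCphi g φ f) 0 = f (φ 0) * deriv g 0 := by
      rw [hTF, primitive_deriv hinner zero_mem_uD]
    have hB0 : ‖f (φ 0)‖ ≤ zNorm 1 f := f_growth hfN hS (hφm zero_mem_uD)
    have hsup : sSup (zygS β (UgCphi g φ f) '' uD) ≤ zNorm 1 f * K :=
      Real.sSup_le (by rintro x ⟨w, hw, rfl⟩; exact hcore f hf w hw)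
        (mul_nonneg (zNorm_nonneg 1 f) hK0)
    have hzdef : zNorm β (UgCphi g φ f)
        = ‖UgCphi g φ f 0‖ + ‖deriv (UgCphi g φ f) 0‖
          + sSup (zygS β (UgCphi g φ f) '' uD) := rfl
    rw [hzdef, hT0, hTd0]
    simp only [norm_zero]
    have h8 : ‖f (φ 0) * deriv g 0‖ ≤ zNorm 1 f * ‖deriv g 0‖ := by
      rw [norm_mul]
      exact mul_le_mul_of_nonneg_right hB0 (norm_nonneg _)
    have hQ0 := zNorm_nonneg 1 f
    nlinarith [hsup, h8]
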